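/- Let V ⊆ W be p-operator spaces such that for all w ∈ M_n(W), ‖w‖_{2,n} = ‖w‖_{1,n}, where ‖·‖_{2,n} restricts the infimum in the definition of ‖·‖_{1,n} to factorizations v = αwβ with α^T ∈ M_{r,n}^{(p')} and β ∈ M_{r,n}^{(p)} (full-rank ℓ_{p'}- resp. ℓ_p-polar decomposible). Then the inclusion T_n(V) ↪ T_n(W) is isometric: for every v ∈ M_n(V), ‖v‖_{T_n(V)} = ‖v‖_{T_n(W)}. -/

import Mathlib

open Finset Matrix

/-- The ℓ_q norm of a finite complex sequence. -/
noncomputable def lpNorm (q : ℝ) {m : ℕ} (x : Fin m → ℂ) : ℝ :=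
  (∑ i, ‖x i‖ ^ q) ^ (1 / q)

/-- The operator norm of a matrix viewed as a map `ℓ_q^b → ℓ_q^a`. -/
noncomputable def opNorm (q : ℝ) {a b : ℕ} (A : Matrix (Fin a) (Fin b) ℂ) : ℝ :=
  sSup {c | ∃ x : Fin b → ℂ, lpNorm q x ≤ 1 ∧ c = lpNorm q (A.mulVec x)}

/-- The entrywise ℓ_q norm of a matrix. -/
noncomputable def eNorm (q : ℝ) {a b : ℕ} (A : Matrix (Fin a) (Fin b) ℂ) : ℝ :=
  (∑ i, ∑ j, ‖A i j‖ ^ q) ^ (1 / q)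

variable {V : Type*} [NormedAddCommGroup V] [NormedSpace ℂ V]

/-- The product `α w β` of scalar matrices `α ∈ M_{n,r}(ℂ)`, `β ∈ M_{r,n}(ℂ)` with a
matrix `w ∈ M_r(V)` over a vector space `V`. -/
def act {n r : ℕ} (α : Matrix (Fin n) (Fin r) ℂ) (w : Matrix (Fin r) (Fin r) V)
    (β : Matrix (Fin r) (Fin n) ℂ) : Matrix (Fin n) (Fin n) V :=
  fun i j => ∑ k, ∑ l, (α i k * β l j) • w k l

/-- The block-diagonal direct sum `v₁ ⊕ v₂ ∈ M_{n+m}(V)`. -/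
def blockDiag {n m : ℕ} (v₁ : Matrix (Fin n) (Fin n) V) (v₂ : Matrix (Fin m) (Fin m) V) :
    Matrix (Fin (n + m)) (Fin (n + m)) V :=
  Matrix.reindex finSumFinEquiv finSumFinEquiv (Matrix.fromBlocks v₁ 0 0 v₂)

/-- An (abstract) p-operator space structure on a complex Banach space `V`: a sequence of
norms on the matrix spaces `M_r(V)` satisfying the axioms `D_∞` and `M_p`. -/
structure POpSpace (p : ℝ) (V : Type*) [NormedAddCommGroup V] [NormedSpace ℂ V] where
  /-- the norm on `M_r(V)` -/
  N : ∀ r : ℕ, Matrix (Fin r) (Fin r) V → ℝ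
  nonneg : ∀ r w, 0 ≤ N r w
  add_le : ∀ r u w, N r (u + w) ≤ N r u + N r w
  eq_zero_iff : ∀ r w, N r w = 0 ↔ w = 0
  smul_eq : ∀ r (c : ℂ) w, N r (c • w) = ‖c‖ * N r w
  Dinf : ∀ (n m : ℕ) (v₁ : Matrix (Fin n) (Fin n) V) (v₂ : Matrix (Fin m) (Fin m) V),
    N (n + m) (blockDiag v₁ v₂) = max (N n v₁) (N m v₂)
  Mp : ∀ (n r : ℕ) (α : Matrix (Fin n) (Fin r) ℂ) (w : Matrix (Fin r) (Fin r) V)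
    (β : Matrix (Fin r) (Fin n) ℂ), N n (act α w β) ≤ opNorm p α * N r w * opNorm p β

/-- The quantity `‖v‖_{1,n}` on `M_n(V)`: the infimum of `‖α‖_{p'} ‖w‖ ‖β‖_p` over all
factorizations `v = α w β`. -/
noncomputable def norm1 {p : ℝ} (p' : ℝ) (S : POpSpace p V) (n : ℕ)
    (v : Matrix (Fin n) (Fin n) V) : ℝ :=
  sInf {c | ∃ (r : ℕ) (α : Matrix (Fin n) (Fin r) ℂ) (w : Matrix (Fin r) (Fin r) V)
      (β : Matrix (Fin r) (Fin n) ℂ),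
      v = act α w β ∧ c = eNorm p' α * S.N r w * eNorm p β}

/-- `τ ∈ M_{r,n}(ℂ)` is an isometry `ℓ_p^n → ℓ_p^r`. -/
def IsLpIsometry (q : ℝ) {r n : ℕ} (τ : Matrix (Fin r) (Fin n) ℂ) : Prop :=
  ∀ x : Fin n → ℂ, lpNorm q (τ.mulVec x) = lpNorm q x

/-- `β ∈ M_{r,n}^{(q)}`: a full-rank, ℓ_q-polar decomposible matrix. -/
def FullRankPolarDecomposible (q : ℝ) {r n : ℕ} (β : Matrix (Fin r) (Fin n) ℂ) : Prop :=
  β.rank = n ∧ ∃ (τ : Matrix (Fin r) (Fin n) ℂ) (β₀ : Matrix (Fin n) (Fin n) ℂ),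
    IsLpIsometry q τ ∧ β = τ * β₀

/-- The quantity `‖v‖_{2,n}` on `M_n(V)`: as `‖·‖_{1,n}` but the infimum is restricted to
factorizations `v = α w β` with `αᵀ ∈ M_{r,n}^{(p')}` and `β ∈ M_{r,n}^{(p)}`. -/
noncomputable def norm2 {p : ℝ} (p' : ℝ) (S : POpSpace p V) (n : ℕ)
    (v : Matrix (Fin n) (Fin n) V) : ℝ :=
  sInf {c | ∃ (r : ℕ) (α : Matrix (Fin n) (Fin r) ℂ) (w : Matrix (Fin r) (Fin r) V)
      (β : Matrix (Fin r) (Fin n) ℂ),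
      FullRankPolarDecomposible p' α.transpose ∧ FullRankPolarDecomposible p β ∧
      v = act α w β ∧ c = eNorm p' α * S.N r w * eNorm p β}

/-- The norm of `T_n(V)` for a subspace `V ⊆ W` (with the p-operator space structure
inherited from `W`): the infimum of `‖α‖_{p'} ‖w‖ ‖β‖_p` over factorizations `v = α w β`
with the entries of `w` lying in the subspace. -/
noncomputable def norm1Sub {p : ℝ} (p' : ℝ) (S : POpSpace p V) (P : Submodule ℂ V)
    (n : ℕ) (v : Matrix (Fin n) (Fin n) V) : ℝ :=
  sInf {c | ∃ (r : ℕ) (α : Matrix (Fin n) (Fin r) ℂ) (w : Matrix (Fin r) (Fin r) V)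
      (β : Matrix (Fin r) (Fin n) ℂ),
      (∀ k l, w k l ∈ P) ∧ v = act α w β ∧ c = eNorm p' α * S.N r w * eNorm p β}

lemma lpNorm_nonneg (q : ℝ) {m : ℕ} (x : Fin m → ℂ) : 0 ≤ lpNorm q x :=
  Real.rpow_nonneg (Finset.sum_nonneg fun i _ => Real.rpow_nonneg (norm_nonneg _) q) _

lemma lpNorm_zero {q : ℝ} (hq : q ≠ 0) {m : ℕ} : lpNorm q (0 : Fin m → ℂ) = 0 := by
  simp [lpNorm, Real.zero_rpow hq, one_div, Real.zero_rpow (inv_ne_zero hq)]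

lemma lpNorm_rpow {q : ℝ} (hq : q ≠ 0) {m : ℕ} (x : Fin m → ℂ) :
    lpNorm q x ^ q = ∑ i, ‖x i‖ ^ q := by
  rw [lpNorm, one_div, Real.rpow_inv_rpow
    (Finset.sum_nonneg fun i _ => Real.rpow_nonneg (norm_nonneg _) q) hq]

lemma lpNorm_pos {q : ℝ} (hq : 0 < q) {m : ℕ} {x : Fin m → ℂ} (hx : x ≠ 0) :
    0 < lpNorm q x := by
  apply Real.rpow_pos_of_pos
  obtain ⟨i, hi⟩ := Function.ne_iff.mp hx
  refine Finset.sum_pos' (fun j _ => Real.rpow_nonneg (norm_nonneg _) q) ⟨i, Finset.mem_univ i, ?_⟩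
  exact Real.rpow_pos_of_pos (norm_pos_iff.mpr hi) q

/-- Hölder inequality for complex sums. -/
lemma holder {p q : ℝ} (hpq : p.HolderConjugate q) {m : ℕ} (f g : Fin m → ℂ) :
    ‖∑ i, f i * g i‖ ≤ lpNorm p f * lpNorm q g := by
  calc ‖∑ i, f i * g i‖ ≤ ∑ i, ‖f i * g i‖ := norm_sum_le _ _
    _ = ∑ i, ‖f i‖ * ‖g i‖ := by simp [norm_mul]
    _ ≤ lpNorm p f * lpNorm q g := by
        have := Real.inner_le_Lp_mul_Lq (Finset.univ : Finset (Fin m))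
          (fun i => ‖f i‖) (fun i => ‖g i‖) hpq
        simpa [lpNorm, abs_norm] using this

/-- Extremal vector for the ℓ_p norm. -/
lemma exists_extremal {p q : ℝ} (hpq : p.HolderConjugate q) {m : ℕ} (z : Fin m → ℂ) :
    ∃ y : Fin m → ℂ, lpNorm q y ≤ 1 ∧ lpNorm p z = ‖∑ i, z i * y i‖ := by
  by_cases hz : z = 0
  · exact ⟨0, by simp [lpNorm_zero hpq.symm.ne_zero],
      by simp [hz, lpNorm_zero hpq.ne_zero]⟩
  · set Z := lpNorm p z with hZdef
    have hZ : 0 < Z := lpNorm_pos hpq.pos hz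
    refine ⟨fun i => (starRingEnd ℂ) (z i) * ((‖z i‖ ^ (p - 2) / Z ^ (p - 1) : ℝ) : ℂ), ?_, ?_⟩
    · -- norm of y
      have hnorm : ∀ i, ‖(starRingEnd ℂ) (z i) * ((‖z i‖ ^ (p - 2) / Z ^ (p - 1) : ℝ) : ℂ)‖
          = ‖z i‖ ^ (p - 1) / Z ^ (p - 1) := by
        intro i
        rw [norm_mul, RCLike.norm_conj, Complex.norm_real, Real.norm_eq_abs, abs_div,
          abs_of_nonneg (Real.rpow_nonneg (norm_nonneg _) _),
          abs_of_nonneg (Real.rpow_pos_of_pos hZ _).le]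
        by_cases hzi : z i = 0
        · simp [hzi, Real.zero_rpow (sub_ne_zero.mpr hpq.lt.ne')]
        · rw [← mul_div_assoc]
          congr 1
          rw [← Real.rpow_one_add' (norm_nonneg _) (by intro hc; rw [show (1 : ℝ) + (p - 2) = p - 1 by ring] at hc; exact hpq.sub_one_ne_zero hc)]
          congr 1; ring
      have hsum : ∑ i, (‖z i‖ ^ (p - 1) / Z ^ (p - 1)) ^ q = 1 := by
        have h1 : ∀ i : Fin m, (‖z i‖ ^ (p - 1) / Z ^ (p - 1)) ^ q
            = ‖z i‖ ^ p / Z ^ p := by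
          intro i
          rw [Real.div_rpow (Real.rpow_nonneg (norm_nonneg _) _)
            (Real.rpow_nonneg hZ.le _), ← Real.rpow_mul (norm_nonneg _),
            ← Real.rpow_mul hZ.le, hpq.sub_one_mul_conj]
        rw [Finset.sum_congr rfl fun i _ => h1 i, ← Finset.sum_div,
          ← lpNorm_rpow hpq.ne_zero, div_self (Real.rpow_pos_of_pos hZ p).ne']
      have : lpNorm q (fun i => (starRingEnd ℂ) (z i) * ((‖z i‖ ^ (p-2) / Z ^ (p-1) : ℝ) : ℂ)) = 1 := by
        rw [lpNorm]
        rw [Finset.sum_congr rfl fun i _ => by rw [hnorm i], hsum, Real.one_rpow]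
      exact this.le
    · -- the inner product equals Z
      have hterm : ∀ i : Fin m, z i * ((starRingEnd ℂ) (z i)
          * ((‖z i‖ ^ (p - 2) / Z ^ (p - 1) : ℝ) : ℂ)) = ((‖z i‖ ^ p / Z ^ (p - 1) : ℝ) : ℂ) := by
        intro i
        rw [← mul_assoc, Complex.mul_conj', ← Complex.ofReal_pow, ← Complex.ofReal_mul,
          Complex.ofReal_inj]
        by_cases hzi : z i = 0
        · simp [hzi, Real.zero_rpow hpq.ne_zero]
        · have hpos : (0:ℝ) < ‖z i‖ := norm_pos_iff.mpr hzi
          rw [← mul_div_assoc]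
          congr 1
          rw [← Real.rpow_natCast ‖z i‖ 2, ← Real.rpow_add hpos]
          congr 1
          push_cast
          ring
      calc lpNorm p z = Z := rfl
        _ = ‖((Z ^ p / Z ^ (p - 1) : ℝ) : ℂ)‖ := by
            rw [← Real.rpow_sub hZ, show p - (p - 1) = 1 by ring, Real.rpow_one,
              Complex.norm_real, Real.norm_eq_abs, abs_of_pos hZ]
        _ = ‖∑ i, z i * ((starRingEnd ℂ) (z i) * ((‖z i‖ ^ (p - 2) / Z ^ (p - 1) : ℝ) : ℂ))‖ := by
            rw [Finset.sum_congr rfl fun i _ => hterm i, ← Complex.ofReal_sum]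
            congr 2
            rw [← Finset.sum_div, ← lpNorm_rpow hpq.ne_zero]

lemma opNorm_le_one {q : ℝ} (hq : q ≠ 0) {a b : ℕ} {A : Matrix (Fin a) (Fin b) ℂ}
    (h : ∀ x : Fin b → ℂ, lpNorm q x ≤ 1 → lpNorm q (A.mulVec x) ≤ 1) :
    opNorm q A ≤ 1 := by
  apply Real.sSup_le _ zero_le_one
  rintro c ⟨x, hx, rfl⟩
  exact h x hx

lemma opNorm_nonneg {q : ℝ} (hq : q ≠ 0) {a b : ℕ} {A : Matrix (Fin a) (Fin b) ℂ}
    (h : ∀ x : Fin b → ℂ, lpNorm q x ≤ 1 → lpNorm q (A.mulVec x) ≤ 1) :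
    0 ≤ opNorm q A := by
  apply Real.sSup_nonneg'
  refine ⟨lpNorm q (A.mulVec 0), ⟨0, by simp [lpNorm_zero hq], rfl⟩, ?_⟩
  exact lpNorm_nonneg _ _

lemma isometry_opNorm {q : ℝ} (hq : q ≠ 0) {r n : ℕ} {τ : Matrix (Fin r) (Fin n) ℂ}
    (hτ : IsLpIsometry q τ) : opNorm q τ ≤ 1 :=
  opNorm_le_one hq fun x hx => (hτ x).le.trans hx

lemma isometry_opNorm_nonneg {q : ℝ} (hq : q ≠ 0) {r n : ℕ} {τ : Matrix (Fin r) (Fin n) ℂ}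
    (hτ : IsLpIsometry q τ) : 0 ≤ opNorm q τ :=
  opNorm_nonneg hq fun x hx => (hτ x).le.trans hx

/-- The transpose of an `ℓ_{p'}` isometry is an `ℓ_p` contraction. -/
lemma transpose_isometry_contraction {p q : ℝ} (hpq : p.HolderConjugate q) {r n : ℕ}
    {σ : Matrix (Fin r) (Fin n) ℂ} (hσ : IsLpIsometry q σ)
    (x : Fin r → ℂ) (hx : lpNorm p x ≤ 1) : lpNorm p (σ.transpose.mulVec x) ≤ 1 := by
  obtain ⟨y, hy, hval⟩ := exists_extremal hpq (σ.transpose.mulVec x)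
  rw [hval]
  have hswap : ∑ i, σ.transpose.mulVec x i * y i = ∑ j, x j * σ.mulVec y j := by
    simp only [Matrix.mulVec, dotProduct, Matrix.transpose_apply,
      Finset.sum_mul, Finset.mul_sum]
    rw [Finset.sum_comm]
    exact Finset.sum_congr rfl fun j _ => Finset.sum_congr rfl fun i _ => by ring
  calc ‖∑ i, σ.transpose.mulVec x i * y i‖ = ‖∑ j, x j * σ.mulVec y j‖ := by rw [hswap]
    _ ≤ lpNorm p x * lpNorm q (σ.mulVec y) := holder hpq _ _
    _ = lpNorm p x * lpNorm q y := by rw [hσ y]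
    _ ≤ 1 * 1 := mul_le_mul hx hy (lpNorm_nonneg _ _) zero_le_one
    _ = 1 := by norm_num

lemma eNorm_nonneg (q : ℝ) {a b : ℕ} (A : Matrix (Fin a) (Fin b) ℂ) : 0 ≤ eNorm q A :=
  Real.rpow_nonneg (Finset.sum_nonneg fun _ _ => Finset.sum_nonneg fun _ _ =>
    Real.rpow_nonneg (norm_nonneg _) q) _

lemma eNorm_transpose (q : ℝ) {a b : ℕ} (A : Matrix (Fin a) (Fin b) ℂ) :
    eNorm q A.transpose = eNorm q A := by
  rw [eNorm, eNorm, Finset.sum_comm]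
  rfl

/-- Multiplying by an isometry on the left preserves the entrywise norm. -/
lemma eNorm_isometry_mul {q : ℝ} (hq : q ≠ 0) {r n : ℕ} {τ : Matrix (Fin r) (Fin n) ℂ}
    (hτ : IsLpIsometry q τ) (B : Matrix (Fin n) (Fin n) ℂ) :
    eNorm q (τ * B) = eNorm q B := by
  have key : ∀ j, ∑ i, ‖(τ * B) i j‖ ^ q = ∑ i, ‖B i j‖ ^ q := by
    intro j
    have hcol : (fun i => (τ * B) i j) = τ.mulVec (fun k => B k j) := by
      funext i; simp [Matrix.mul_apply, Matrix.mulVec, dotProduct]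
    calc ∑ i, ‖(τ * B) i j‖ ^ q = lpNorm q (fun i => (τ * B) i j) ^ q :=
          (lpNorm_rpow hq _).symm
      _ = lpNorm q (fun k => B k j) ^ q := by rw [hcol, hτ]
      _ = ∑ i, ‖B i j‖ ^ q := lpNorm_rpow hq _
  rw [eNorm, eNorm, Finset.sum_comm]
  conv_rhs => rw [Finset.sum_comm]
  rw [Finset.sum_congr rfl fun j _ => key j]

lemma isUnit_of_rank_eq {n : ℕ} {A : Matrix (Fin n) (Fin n) ℂ} (h : A.rank = n) :
    IsUnit A := by
  rw [← Matrix.mulVec_surjective_iff_isUnit]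
  have : LinearMap.range A.mulVecLin = ⊤ := by
    apply Submodule.eq_top_of_finrank_eq
    rw [← Matrix.rank, h]
    simp
  have hs := LinearMap.range_eq_top.mp this
  intro y
  obtain ⟨x, hx⟩ := hs y
  exact ⟨x, by simpa using hx⟩

lemma act_one_one {n : ℕ} (v : Matrix (Fin n) (Fin n) V) : act 1 v 1 = v := by
  funext i j
  simp [act, Matrix.one_apply, ite_smul, mul_ite, mul_one, mul_zero, ite_and]

lemma act_act {n s r : ℕ} (A : Matrix (Fin n) (Fin s) ℂ) (B : Matrix (Fin s) (Fin r) ℂ)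
    (w : Matrix (Fin r) (Fin r) V) (C : Matrix (Fin r) (Fin s) ℂ)
    (D : Matrix (Fin s) (Fin n) ℂ) :
    act A (act B w C) D = act (A * B) w (C * D) := by
  funext i j
  have lhs : (act A (act B w C) D) i j
      = ∑ k, ∑ l, ∑ a, ∑ b, (A i k * B k a * C b l * D l j) • w a b := by
    simp only [act, Finset.smul_sum, smul_smul]
    refine Finset.sum_congr rfl fun k _ => Finset.sum_congr rfl fun l _ =>
      Finset.sum_congr rfl fun a _ => Finset.sum_congr rfl fun b _ => ?_
    congr 1; ring
  have rhs : (act (A * B) w (C * D)) i j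
      = ∑ a, ∑ b, ∑ k, ∑ l, (A i k * B k a * C b l * D l j) • w a b := by
    simp only [act, Matrix.mul_apply, Finset.sum_mul, Finset.mul_sum, Finset.sum_smul]
    refine Finset.sum_congr rfl fun a _ => Finset.sum_congr rfl fun b _ => ?_
    rw [Finset.sum_comm]
    refine Finset.sum_congr rfl fun k _ => Finset.sum_congr rfl fun l _ => ?_
    congr 1; ring
  rw [lhs, rhs]
  refine Eq.symm ?_
  calc ∑ a, ∑ b, ∑ k, ∑ l, (A i k * B k a * C b l * D l j) • w a b
      = ∑ a, ∑ k, ∑ b, ∑ l, (A i k * B k a * C b l * D l j) • w a b :=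
        Finset.sum_congr rfl fun a _ => Finset.sum_comm
    _ = ∑ k, ∑ a, ∑ b, ∑ l, (A i k * B k a * C b l * D l j) • w a b := Finset.sum_comm
    _ = ∑ k, ∑ a, ∑ l, ∑ b, (A i k * B k a * C b l * D l j) • w a b :=
        Finset.sum_congr rfl fun k _ => Finset.sum_congr rfl fun a _ => Finset.sum_comm
    _ = ∑ k, ∑ l, ∑ a, ∑ b, (A i k * B k a * C b l * D l j) • w a b :=
        Finset.sum_congr rfl fun k _ => Finset.sum_comm

lemma act_mem {n r : ℕ} (P : Submodule ℂ V) (A : Matrix (Fin n) (Fin r) ℂ)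
    (v : Matrix (Fin r) (Fin r) V) (B : Matrix (Fin r) (Fin n) ℂ)
    (hv : ∀ k l, v k l ∈ P) : ∀ k l, act A v B k l ∈ P := by
  intro k l
  exact Submodule.sum_mem _ fun a _ => Submodule.sum_mem _ fun b _ =>
    Submodule.smul_mem _ _ (hv a b)

/-- Proposition 4.5: if `‖w‖_{2,n} = ‖w‖_{1,n}` for every `w ∈ M_n(W)`, then the
inclusion `T_n(V) ↪ T_n(W)` is isometric for every subspace `V ⊆ W`. -/
theorem inclusion_isometric (p p' : ℝ) (hp : 1 < p) (hp' : 1 < p')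
    (hconj : 1 / p + 1 / p' = 1) (S : POpSpace p V) (P : Submodule ℂ V) (n : ℕ)
    (h : ∀ w : Matrix (Fin n) (Fin n) V, norm2 p' S n w = norm1 p' S n w) :
    ∀ v : Matrix (Fin n) (Fin n) V, (∀ i j, v i j ∈ P) →
      norm1Sub p' S P n v = norm1 p' S n v := by
  intro v hv
  have hpq : p.HolderConjugate p' := Real.holderConjugate_iff.mpr ⟨hp, by simpa [one_div] using hconj⟩
  have hp0 : p ≠ 0 := hpq.ne_zero
  have hp'0 : p' ≠ 0 := hpq.symm.ne_zero
  have hact1 : v = act 1 v 1 := (act_one_one v).symm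
  have hFRPD : ∀ q : ℝ, FullRankPolarDecomposible q (1 : Matrix (Fin n) (Fin n) ℂ) :=
    fun q => ⟨by simp, 1, 1, fun x => by rw [Matrix.one_mulVec], (one_mul _).symm⟩
  have bdd_sub : BddBelow {c | ∃ (r : ℕ) (α : Matrix (Fin n) (Fin r) ℂ)
      (w : Matrix (Fin r) (Fin r) V) (β : Matrix (Fin r) (Fin n) ℂ),
      (∀ k l, w k l ∈ P) ∧ v = act α w β ∧ c = eNorm p' α * S.N r w * eNorm p β} := by
    refine ⟨0, ?_⟩
    rintro c ⟨r, α, w, β, -, -, rfl⟩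
    exact mul_nonneg (mul_nonneg (eNorm_nonneg _ _) (S.nonneg _ _)) (eNorm_nonneg _ _)
  apply le_antisymm
  · -- norm1Sub ≤ norm1
    rw [← h v, norm2]
    apply le_csInf
    · exact ⟨eNorm p' 1 * S.N n v * eNorm p 1, n, 1, v, 1,
        by simpa using hFRPD p', hFRPD p, hact1, rfl⟩
    rintro c ⟨r, α, w, β, ⟨hαrank, σ, α₀, hσ, hαd⟩, ⟨hβrank, τ, β₀, hτ, hβd⟩, hfact, rfl⟩
    have hβ₀ : IsUnit β₀ := by
      apply isUnit_of_rank_eq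
      refine le_antisymm ((Matrix.rank_le_card_width β₀).trans (by simp)) ?_
      calc n = β.rank := hβrank.symm
        _ ≤ β₀.rank := by rw [hβd]; exact Matrix.rank_mul_le_right τ β₀
    have hα₀ : IsUnit α₀ := by
      apply isUnit_of_rank_eq
      refine le_antisymm ((Matrix.rank_le_card_width α₀).trans (by simp)) ?_
      calc n = α.transpose.rank := hαrank.symm
        _ ≤ α₀.rank := by rw [hαd]; exact Matrix.rank_mul_le_right σ α₀
    have hdβ : IsUnit β₀.det := (Matrix.isUnit_iff_isUnit_det _).mp hβ₀
    have hdαT : IsUnit α₀.transpose.det := by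
      rw [Matrix.det_transpose]; exact (Matrix.isUnit_iff_isUnit_det _).mp hα₀
    set w' := act σ.transpose w τ with hw'
    have hα : α = α₀.transpose * σ.transpose := by
      have := congrArg Matrix.transpose hαd
      simpa [Matrix.transpose_mul] using this
    have hfact' : v = act α₀.transpose w' β₀ := by
      rw [hfact, hα, hβd, ← act_act]
    have hmem : ∀ k l, w' k l ∈ P := by
      have hw'' : w' = act α₀.transpose⁻¹ v β₀⁻¹ := by
        rw [hfact', act_act, Matrix.nonsing_inv_mul _ hdαT, Matrix.mul_nonsing_inv _ hdβ,
          act_one_one]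
      rw [hw'']
      exact act_mem P _ _ _ hv
    have hσc := transpose_isometry_contraction hpq hσ
    have hNw' : S.N n w' ≤ S.N r w := by
      calc S.N n w' ≤ opNorm p σ.transpose * S.N r w * opNorm p τ := S.Mp n r _ w τ
        _ ≤ 1 * S.N r w * 1 := by
            refine mul_le_mul (mul_le_mul (opNorm_le_one hp0 hσc) le_rfl (S.nonneg _ _)
              zero_le_one) (isometry_opNorm hp0 hτ) (isometry_opNorm_nonneg hp0 hτ) ?_
            exact mul_nonneg zero_le_one (S.nonneg _ _)
        _ = S.N r w := by ring
    have heα : eNorm p' α = eNorm p' α₀.transpose := by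
      calc eNorm p' α = eNorm p' α.transpose := (eNorm_transpose p' α).symm
        _ = eNorm p' α₀ := by rw [hαd]; exact eNorm_isometry_mul hp'0 hσ α₀
        _ = eNorm p' α₀.transpose := (eNorm_transpose p' α₀).symm
    have heβ : eNorm p β = eNorm p β₀ := by
      rw [hβd]; exact eNorm_isometry_mul hp0 hτ β₀
    calc norm1Sub p' S P n v ≤ eNorm p' α₀.transpose * S.N n w' * eNorm p β₀ :=
          csInf_le bdd_sub ⟨n, α₀.transpose, w', β₀, hmem, hfact', rfl⟩
      _ ≤ eNorm p' α * S.N r w * eNorm p β := by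
          rw [heα, heβ]
          exact mul_le_mul_of_nonneg_right
            (mul_le_mul_of_nonneg_left hNw' (eNorm_nonneg _ _)) (eNorm_nonneg _ _)
  · -- norm1 ≤ norm1Sub
    apply csInf_le_csInf
    · refine ⟨0, ?_⟩
      rintro c ⟨r, α, w, β, -, rfl⟩
      exact mul_nonneg (mul_nonneg (eNorm_nonneg _ _) (S.nonneg _ _)) (eNorm_nonneg _ _)
    · exact ⟨eNorm p' 1 * S.N n v * eNorm p 1, n, 1, v, 1, hv, hact1, rfl⟩
    · rintro c ⟨r, α, w, β, -, hfact, rfl⟩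
      exact ⟨r, α, w, β, hfact, rfl⟩
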